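/- Let p be a prime and let A, B be distinct nonzero integers, neither divisible by p. Then there exists a finite set 𝒟 ⊂ ℤ such that every solution (x_1,x_2,x_3,x_4) ∈ ℕ_0^4 of the equation A·p^{x_1} − A·p^{x_2} + B·p^{x_3} − B·p^{x_4} = 0 satisfies (x_3 − x_4) − (x_1 − x_2) ∈ 𝒟. -/

import Mathlib

private lemma not_dvd_pow_sub_one' {p : ℕ} (hp : p.Prime) {a : ℕ} (ha : 0 < a) :
    ¬ (p : ℤ) ∣ (p : ℤ) ^ a - 1 := by
  intro h
  have h2 : (p : ℤ) ∣ (p : ℤ) ^ a := dvd_pow_self _ ha.ne'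
  have h3 : (p : ℤ) ∣ 1 := by
    have := dvd_sub h2 h
    simpa using this
  have h4 := Int.le_of_dvd one_pos h3
  have h5 := hp.one_lt
  exact absurd h4 (by exact_mod_cast Nat.not_le.mpr h5)

private lemma pow_inj' {p : ℕ} (hp : p.Prime) {i j : ℕ} (h : (p:ℤ)^i = (p:ℤ)^j) : i = j := by
  have : (p:ℕ)^i = p^j := by exact_mod_cast h
  exact Nat.pow_right_injective hp.two_le this

private lemma cancel_pow' {p : ℕ} (hp : p.Prime) {m n : ℕ} {u v : ℤ}
    (hu : ¬ (p:ℤ) ∣ u) (hv : ¬ (p:ℤ) ∣ v)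
    (h : (p:ℤ)^m * u = (p:ℤ)^n * v) : u = v := by
  have hp0 : (p:ℤ) ≠ 0 := by exact_mod_cast hp.ne_zero
  wlog hmn : m ≤ n generalizing m n u v
  · exact (this hv hu h.symm (le_of_not_ge hmn)).symm
  rw [show n = m + (n - m) by omega, pow_add, mul_assoc] at h
  have h2 : u = (p:ℤ)^(n-m) * v := mul_left_cancel₀ (pow_ne_zero _ hp0) h
  rcases Nat.eq_or_lt_of_le hmn with he | hlt
  · rw [he] at h2
    simpa using h2
  · exfalso
    apply hu
    rw [h2]
    exact Dvd.dvd.mul_right (dvd_pow_self _ (by omega : n - m ≠ 0)) v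

private lemma bnd' {p : ℕ} (hp : p.Prime) {c d : ℤ} (hc : 1 ≤ c) (hd : 1 ≤ d)
    {a b : ℕ} (h : c * ((p:ℤ)^a - 1) = d * ((p:ℤ)^b - 1)) :
    (b:ℤ) ≤ a + c := by
  have hp1 : (1:ℤ) < (p:ℤ) := by exact_mod_cast hp.one_lt
  have hpa : (1:ℤ) ≤ (p:ℤ)^a := one_le_pow₀ (by linarith)
  have hpb : (1:ℤ) ≤ (p:ℤ)^b := one_le_pow₀ (by linarith)
  have hple : (p:ℤ)^b ≤ c * (p:ℤ)^a := by nlinarith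
  -- c < p ^ c.toNat
  set t := c.toNat with ht
  have hct : (c:ℤ) = (t:ℤ) := by simp [ht, Int.toNat_of_nonneg (by linarith : (0:ℤ) ≤ c)]
  have h2t : t < 2 ^ t := Nat.lt_two_pow_self
  have h2p : (2:ℕ) ^ t ≤ p ^ t := Nat.pow_le_pow_left hp.two_le t
  have hclt : c < (p:ℤ) ^ t := by
    rw [hct]
    exact_mod_cast lt_of_lt_of_le h2t h2p
  have hfin : (p:ℤ)^b < (p:ℤ)^(a + t) := by
    rw [pow_add]
    have hpa0 : (0:ℤ) < (p:ℤ)^a := by linarith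
    calc (p:ℤ)^b ≤ c * (p:ℤ)^a := hple
      _ < (p:ℤ)^t * (p:ℤ)^a := by nlinarith
      _ = (p:ℤ)^a * (p:ℤ)^t := by ring
  have hblt : b < a + t := by
    by_contra hcon
    exact absurd (pow_le_pow_right₀ (by linarith : (1:ℤ) ≤ (p:ℤ)) (Nat.le_of_not_lt hcon)) (not_le.mpr hfin)
  have : (b:ℤ) < (a:ℤ) + t := by exact_mod_cast hblt
  linarith [hct ▸ this]

private lemma key' {p : ℕ} (hp : p.Prime) {C D : ℤ} (hC : C ≠ 0) (hD : D ≠ 0)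
    (hpC : ¬(p:ℤ) ∣ C) (hpD : ¬(p:ℤ) ∣ D) {a b : ℕ} (ha : 0 < a) (hb : 0 < b)
    (h : C * ((p:ℤ)^a - 1) = D * ((p:ℤ)^b - 1)) :
    (C = D ∧ a = b) ∨ ((a:ℤ) ≤ 2*(|C|+|D|) ∧ (b:ℤ) ≤ 2*(|C|+|D|)) := by
  have hp1 : (1:ℤ) < (p:ℤ) := by exact_mod_cast hp.one_lt
  have hpa : (1:ℤ) ≤ (p:ℤ)^a := one_le_pow₀ (by linarith)
  have hpb : (1:ℤ) ≤ (p:ℤ)^b := one_le_pow₀ (by linarith)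
  by_cases hCD : C = D
  · left
    refine ⟨hCD, ?_⟩
    subst hCD
    have h2 : (p:ℤ)^a - 1 = (p:ℤ)^b - 1 := mul_left_cancel₀ hC h
    exact pow_inj' hp (by linarith)
  right
  -- absolute value version
  have habs : |C| * ((p:ℤ)^a - 1) = |D| * ((p:ℤ)^b - 1) := by
    have := congrArg abs h
    rwa [abs_mul, abs_mul, abs_of_nonneg (by linarith : (0:ℤ) ≤ (p:ℤ)^a - 1),
      abs_of_nonneg (by linarith : (0:ℤ) ≤ (p:ℤ)^b - 1)] at this
  have hC1 : 1 ≤ |C| := Int.one_le_abs hC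
  have hD1 : 1 ≤ |D| := Int.one_le_abs hD
  have hba : (b:ℤ) ≤ a + |C| := bnd' hp hC1 hD1 habs
  have hab : (a:ℤ) ≤ b + |D| := bnd' hp hD1 hC1 habs.symm
  -- min bound via divisibility
  have hkey : C * (p:ℤ)^a - D * (p:ℤ)^b = C - D := by linarith
  have hdvd : (p:ℤ)^(min a b) ∣ C - D := by
    rw [← hkey]
    exact dvd_sub (dvd_mul_of_dvd_right (pow_dvd_pow _ (min_le_left a b)) C)
      (dvd_mul_of_dvd_right (pow_dvd_pow _ (min_le_right a b)) D)
  have hCD0 : C - D ≠ 0 := sub_ne_zero.mpr hCD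
  have h4 : (p:ℤ)^(min a b) ≤ |C - D| :=
    Int.le_of_dvd (abs_pos.mpr hCD0) ((dvd_abs _ _).mpr hdvd)
  have h5 : |C - D| ≤ |C| + |D| := abs_sub _ _
  have h6 : ((min a b : ℕ) : ℤ) < (p:ℤ)^(min a b) := by
    have := Nat.lt_pow_self (n := min a b) hp.one_lt
    exact_mod_cast this
  have h7 : ((min a b : ℕ) : ℤ) < |C| + |D| := by linarith
  rcases le_total a b with hle | hle
  · have hmin : min a b = a := min_eq_left hle
    rw [hmin] at h7
    constructor <;> linarith
  · have hmin : min a b = b := min_eq_right hle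
    rw [hmin] at h7
    constructor <;> linarith

private lemma key2' {p : ℕ} (hp : p.Prime) {C D : ℤ} (hC : C ≠ 0) (hD : D ≠ 0)
    (hpC : ¬(p:ℤ) ∣ C) (hpD : ¬(p:ℤ) ∣ D) {a b m n : ℕ} (ha : 0 < a) (hb : 0 < b)
    (h : C * (p:ℤ)^m * ((p:ℤ)^a - 1) = D * (p:ℤ)^n * ((p:ℤ)^b - 1)) :
    (C = D ∧ a = b) ∨ ((a:ℤ) ≤ 2*(|C|+|D|) ∧ (b:ℤ) ≤ 2*(|C|+|D|)) := by
  have hpZ : Prime (p:ℤ) := Nat.prime_iff_prime_int.mp hp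
  have hu : ¬ (p:ℤ) ∣ C * ((p:ℤ)^a - 1) := by
    intro hd
    rcases hpZ.dvd_mul.mp hd with h1 | h1
    · exact hpC h1
    · exact not_dvd_pow_sub_one' hp ha h1
  have hv : ¬ (p:ℤ) ∣ D * ((p:ℤ)^b - 1) := by
    intro hd
    rcases hpZ.dvd_mul.mp hd with h1 | h1
    · exact hpD h1
    · exact not_dvd_pow_sub_one' hp hb h1
  have h' : (p:ℤ)^m * (C * ((p:ℤ)^a - 1)) = (p:ℤ)^n * (D * ((p:ℤ)^b - 1)) := by
    linear_combination h
  exact key' hp hC hD hpC hpD ha hb (cancel_pow' hp hu hv h')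

/-- There is a finite set `𝒟 ⊆ ℤ` such that every solution in nonnegative
integers of `A p^{x₁} - A p^{x₂} + B p^{x₃} - B p^{x₄} = 0` satisfies
`(x₃ - x₄) - (x₁ - x₂) ∈ 𝒟`. -/
theorem stmt_1 (p : ℕ) (hp : p.Prime) (A B : ℤ) (hA : A ≠ 0) (hB : B ≠ 0)
    (hAB : A ≠ B) (hpA : ¬ (p : ℤ) ∣ A) (hpB : ¬ (p : ℤ) ∣ B) :
    ∃ 𝒟 : Finset ℤ, ∀ x₁ x₂ x₃ x₄ : ℕ,
      A * (p : ℤ) ^ x₁ - A * (p : ℤ) ^ x₂ + B * (p : ℤ) ^ x₃ - B * (p : ℤ) ^ x₄ = 0 →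
      ((x₃ : ℤ) - (x₄ : ℤ)) - ((x₁ : ℤ) - (x₂ : ℤ)) ∈ 𝒟 := by
  refine ⟨Finset.Icc (-(4*(|A|+|B|))) (4*(|A|+|B|)), fun x₁ x₂ x₃ x₄ heq => ?_⟩
  rw [Finset.mem_Icc]
  have hA1 : 1 ≤ |A| := Int.one_le_abs hA
  have hB1 : 1 ≤ |B| := Int.one_le_abs hB
  have hnB : (-B) ≠ 0 := neg_ne_zero.mpr hB
  have hnA : (-A) ≠ 0 := neg_ne_zero.mpr hA
  have hpnB : ¬ (p:ℤ) ∣ (-B) := fun h => hpB ((dvd_neg).mp h)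
  have hpnA : ¬ (p:ℤ) ∣ (-A) := fun h => hpA ((dvd_neg).mp h)
  by_cases h12 : x₁ = x₂
  · -- then x₃ = x₄ and the quantity is 0
    subst h12
    have h34 : (p:ℤ)^x₃ = (p:ℤ)^x₄ := by
      have : B * ((p:ℤ)^x₃ - (p:ℤ)^x₄) = 0 := by linarith
      have := mul_eq_zero.mp this
      rcases this with h | h
      · exact absurd h hB
      · linarith
    have : x₃ = x₄ := pow_inj' hp h34
    subst this
    constructor <;> linarith
  by_cases h34 : x₃ = x₄
  · subst h34
    exfalso
    have h12' : (p:ℤ)^x₁ = (p:ℤ)^x₂ := by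
      have : A * ((p:ℤ)^x₁ - (p:ℤ)^x₂) = 0 := by linarith
      rcases mul_eq_zero.mp this with h | h
      · exact absurd h hA
      · linarith
    exact h12 (pow_inj' hp h12')
  -- nontrivial case
  rcases Nat.lt_or_ge x₁ x₂ with hlt1 | hge1
  all_goals rcases Nat.lt_or_ge x₃ x₄ with hlt2 | hge2
  · -- x₁ < x₂, x₃ < x₄ : (-A) p^{x₁}(p^a-1) = B p^{x₃}(p^b-1)
    have e1 : (p:ℤ)^x₂ = (p:ℤ)^x₁ * (p:ℤ)^(x₂-x₁) := by rw [← pow_add]; congr 1; omega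
    have e2 : (p:ℤ)^x₄ = (p:ℤ)^x₃ * (p:ℤ)^(x₄-x₃) := by rw [← pow_add]; congr 1; omega
    rw [e1, e2] at heq
    have h : (-A) * (p:ℤ)^x₁ * ((p:ℤ)^(x₂-x₁) - 1) = B * (p:ℤ)^x₃ * ((p:ℤ)^(x₄-x₃) - 1) := by
      linear_combination heq
    have haz : ((x₂-x₁ : ℕ):ℤ) = (x₂:ℤ) - x₁ := by
      rw [Nat.cast_sub (le_of_lt hlt1)]
    have hbz : ((x₄-x₃ : ℕ):ℤ) = (x₄:ℤ) - x₃ := by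
      rw [Nat.cast_sub (le_of_lt hlt2)]
    rcases key2' hp hnA hB hpnA hpB (by omega : 0 < x₂-x₁) (by omega : 0 < x₄-x₃) h with
      ⟨hcd, habe⟩ | ⟨hb1, hb2⟩
    · -- -A = B and a = b : difference is 0
      have heqz : (x₂:ℤ) - x₁ = (x₄:ℤ) - x₃ := by
        rw [← haz, ← hbz]; exact_mod_cast habe
      constructor <;> linarith
    · rw [haz, abs_neg] at hb1
      rw [hbz, abs_neg] at hb2
      constructor <;> linarith
  · -- x₁ < x₂, x₃ > x₄ : (-A) p^{x₁}(p^a-1) = (-B) p^{x₄}(p^b-1)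
    have hlt2' : x₄ < x₃ := by omega
    have e1 : (p:ℤ)^x₂ = (p:ℤ)^x₁ * (p:ℤ)^(x₂-x₁) := by rw [← pow_add]; congr 1; omega
    have e2 : (p:ℤ)^x₃ = (p:ℤ)^x₄ * (p:ℤ)^(x₃-x₄) := by rw [← pow_add]; congr 1; omega
    rw [e1, e2] at heq
    have h : (-A) * (p:ℤ)^x₁ * ((p:ℤ)^(x₂-x₁) - 1) = (-B) * (p:ℤ)^x₄ * ((p:ℤ)^(x₃-x₄) - 1) := by
      linear_combination heq
    have haz : ((x₂-x₁ : ℕ):ℤ) = (x₂:ℤ) - x₁ := by rw [Nat.cast_sub (le_of_lt hlt1)]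
    have hbz : ((x₃-x₄ : ℕ):ℤ) = (x₃:ℤ) - x₄ := by rw [Nat.cast_sub (le_of_lt hlt2')]
    rcases key2' hp hnA hnB hpnA hpnB (by omega : 0 < x₂-x₁) (by omega : 0 < x₃-x₄) h with
      ⟨hcd, habe⟩ | ⟨hb1, hb2⟩
    · -- -A = -B means A = B, contradiction
      exact absurd (by linarith : A = B) hAB
    · rw [haz, abs_neg, abs_neg] at hb1
      rw [hbz, abs_neg, abs_neg] at hb2
      have ha0 : (0:ℤ) ≤ (x₂:ℤ) - x₁ := by rw [← haz]; exact Int.natCast_nonneg _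
      have hb0 : (0:ℤ) ≤ (x₃:ℤ) - x₄ := by rw [← hbz]; exact Int.natCast_nonneg _
      constructor <;> linarith
  · -- x₁ > x₂, x₃ < x₄ : A p^{x₂}(p^a-1) = B p^{x₃}(p^b-1)
    have hgt1 : x₂ < x₁ := by omega
    have e1 : (p:ℤ)^x₁ = (p:ℤ)^x₂ * (p:ℤ)^(x₁-x₂) := by rw [← pow_add]; congr 1; omega
    have e2 : (p:ℤ)^x₄ = (p:ℤ)^x₃ * (p:ℤ)^(x₄-x₃) := by rw [← pow_add]; congr 1; omega
    rw [e1, e2] at heq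
    have h : A * (p:ℤ)^x₂ * ((p:ℤ)^(x₁-x₂) - 1) = B * (p:ℤ)^x₃ * ((p:ℤ)^(x₄-x₃) - 1) := by
      linear_combination heq
    have haz : ((x₁-x₂ : ℕ):ℤ) = (x₁:ℤ) - x₂ := by rw [Nat.cast_sub (le_of_lt hgt1)]
    have hbz : ((x₄-x₃ : ℕ):ℤ) = (x₄:ℤ) - x₃ := by rw [Nat.cast_sub (le_of_lt hlt2)]
    rcases key2' hp hA hB hpA hpB (by omega : 0 < x₁-x₂) (by omega : 0 < x₄-x₃) h with
      ⟨hcd, habe⟩ | ⟨hb1, hb2⟩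
    · exact absurd hcd hAB
    · rw [haz] at hb1
      rw [hbz] at hb2
      have ha0 : (0:ℤ) ≤ (x₁:ℤ) - x₂ := by rw [← haz]; exact Int.natCast_nonneg _
      have hb0 : (0:ℤ) ≤ (x₄:ℤ) - x₃ := by rw [← hbz]; exact Int.natCast_nonneg _
      constructor <;> linarith
  · -- x₁ > x₂, x₃ > x₄ : A p^{x₂}(p^a-1) = (-B) p^{x₄}(p^b-1)
    have hgt1 : x₂ < x₁ := by omega
    have hgt2 : x₄ < x₃ := by omega
    have e1 : (p:ℤ)^x₁ = (p:ℤ)^x₂ * (p:ℤ)^(x₁-x₂) := by rw [← pow_add]; congr 1; omega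
    have e2 : (p:ℤ)^x₃ = (p:ℤ)^x₄ * (p:ℤ)^(x₃-x₄) := by rw [← pow_add]; congr 1; omega
    rw [e1, e2] at heq
    have h : A * (p:ℤ)^x₂ * ((p:ℤ)^(x₁-x₂) - 1) = (-B) * (p:ℤ)^x₄ * ((p:ℤ)^(x₃-x₄) - 1) := by
      linear_combination heq
    have haz : ((x₁-x₂ : ℕ):ℤ) = (x₁:ℤ) - x₂ := by rw [Nat.cast_sub (le_of_lt hgt1)]
    have hbz : ((x₃-x₄ : ℕ):ℤ) = (x₃:ℤ) - x₄ := by rw [Nat.cast_sub (le_of_lt hgt2)]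
    rcases key2' hp hA hnB hpA hpnB (by omega : 0 < x₁-x₂) (by omega : 0 < x₃-x₄) h with
      ⟨hcd, habe⟩ | ⟨hb1, hb2⟩
    · -- A = -B and a = b : difference is 0
      have heqz : (x₁:ℤ) - x₂ = (x₃:ℤ) - x₄ := by
        rw [← haz, ← hbz]; exact_mod_cast habe
      constructor <;> linarith
    · rw [haz, abs_neg] at hb1
      rw [hbz, abs_neg] at hb2
      have ha0 : (0:ℤ) ≤ (x₁:ℤ) - x₂ := by rw [← haz]; exact Int.natCast_nonneg _
      have hb0 : (0:ℤ) ≤ (x₃:ℤ) - x₄ := by rw [← hbz]; exact Int.natCast_nonneg _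
      constructor <;> linarith
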